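/- Fix k ≥ 2 and v ∈ ℝ_{>0}^k, and let x be the Inverse Proportional Allocation with parameter ℓ = 1, i.e., x_i = max(0, 1 − c/v_i) with c ≥ 0 the unique constant making Σ_i x_i = 1. Then Σ_i v_i x_i ≥ (3/4)·max_i v_i. -/

import Mathlib

theorem ipa_welfare_three_fourths (k : ℕ) (hk : 2 ≤ k) (v : Fin k → ℝ)
    (hv : ∀ i, 0 < v i) (c : ℝ) (hc : 0 ≤ c)
    (hsum : ∑ i, max 0 (1 - c / v i) = 1) :
    (3 / 4 : ℝ) * Finset.univ.sup' (Finset.univ_nonempty_iff.mpr ⟨⟨0, by omega⟩⟩) v ≤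
      ∑ i, v i * max 0 (1 - c / v i) := by
  set M := Finset.univ.sup' (Finset.univ_nonempty_iff.mpr ⟨⟨0, by omega⟩⟩) v with hMdef
  obtain ⟨i0, -, hi0⟩ := Finset.exists_mem_eq_sup'
    (Finset.univ_nonempty_iff.mpr ⟨(⟨0, by omega⟩ : Fin k)⟩) v
  have hi0' : v i0 = M := hi0.symm
  have hMpos : 0 < M := hi0' ▸ hv i0
  have hle : ∀ i, v i ≤ M := fun i => Finset.le_sup' v (Finset.mem_univ i)
  have hcM : c < M := by
    by_contra h
    push_neg at h
    have hz : ∑ i, max 0 (1 - c / v i) = 0 := by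
      refine Finset.sum_eq_zero fun i _ => ?_
      have h1 : 1 ≤ c / v i := (one_le_div (hv i)).mpr (le_trans (hle i) h)
      exact max_eq_left (by linarith)
    rw [hz] at hsum
    norm_num at hsum
  have key : ∀ i, c * max 0 (1 - c / v i) ≤ v i * max 0 (1 - c / v i) := by
    intro i
    rcases le_or_gt (1 - c / v i) 0 with h | h
    · rw [max_eq_left h]; simp
    · have hcv : c / v i < 1 := by linarith
      have hcvi : c < v i := (div_lt_one (hv i)).mp hcv
      have hx : 0 ≤ max 0 (1 - c / v i) := le_max_left _ _
      nlinarith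
  have hx0 : max 0 (1 - c / v i0) = 1 - c / v i0 := by
    apply max_eq_right
    have : c / v i0 < 1 := (div_lt_one (hv i0)).mpr (hi0' ▸ hcM)
    linarith
  have hsplit := Finset.add_sum_erase Finset.univ
    (fun i => max 0 (1 - c / v i)) (Finset.mem_univ i0)
  have hsplit2 := Finset.add_sum_erase Finset.univ
    (fun i => v i * max 0 (1 - c / v i)) (Finset.mem_univ i0)
  have herase : ∑ i ∈ Finset.univ.erase i0, max 0 (1 - c / v i) = c / v i0 := by
    have := hsplit.trans hsum
    rw [hx0] at this
    linarith
  have hbound : c * (c / M) ≤ ∑ i ∈ Finset.univ.erase i0, v i * max 0 (1 - c / v i) := by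
    calc c * (c / M) = c * ∑ i ∈ Finset.univ.erase i0, max 0 (1 - c / v i) := by
          rw [herase, hi0']
      _ = ∑ i ∈ Finset.univ.erase i0, c * max 0 (1 - c / v i) := Finset.mul_sum _ _ _
      _ ≤ _ := Finset.sum_le_sum fun i _ => key i
  have hterm : v i0 * max 0 (1 - c / v i0) = M - c := by
    rw [hx0, hi0']
    field_simp
  have hmain : M - c + c * (c / M) ≤ ∑ i, v i * max 0 (1 - c / v i) := by
    rw [← hsplit2, hterm]
    linarith
  have hfinal : (3 / 4 : ℝ) * M ≤ M - c + c * (c / M) := by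
    have h : c * (c / M) * M = c ^ 2 := by
      field_simp
    nlinarith [sq_nonneg (M / 2 - c), hMpos, h]
  linarith
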